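/- Let p be a prime and let t ∈ ℤ_(p)[[u]] be a formal power series with t(0) = 0 (zero constant term). Then for every positive integer n, every coefficient of the power series t(u)^{np} − t(u^p)^n lies in np·ℤ_(p); moreover the lowest-order term of t(u)^{np} − t(u^p)^n has degree at least np. -/

import Mathlib

open PowerSeries

/-- `x ∈ ℤ_(p)`: `x` is a rational number whose denominator is prime to `p`. -/
def PInt (p : ℕ) (x : ℚ) : Prop := ∃ a b : ℤ, ¬ (p : ℤ) ∣ b ∧ (b : ℚ) * x = (a : ℚ)

/-- Composition of a power series with `u ↦ u^p`. -/
noncomputable def substPow (p : ℕ) (t : PowerSeries ℚ) : PowerSeries ℚ :=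
  PowerSeries.mk fun n => if p ∣ n then coeff (n / p) t else 0

section Aux

variable (p : ℕ) [Fact p.Prime]

lemma pZprime : Prime ((p : ℤ)) := Nat.prime_iff_prime_int.mp Fact.out

/-- The subring `ℤ_(p)` of `ℚ`. -/
def Sp : Subring ℚ where
  carrier := {x | PInt p x}
  zero_mem' := ⟨0, 1, by simpa using (pZprime p).not_dvd_one, by norm_num⟩
  one_mem' := ⟨1, 1, by simpa using (pZprime p).not_dvd_one, by norm_num⟩
  add_mem' := by
    rintro x y ⟨a1, b1, hb1, h1⟩ ⟨a2, b2, hb2, h2⟩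
    refine ⟨a1 * b2 + a2 * b1, b1 * b2, fun h => ?_, ?_⟩
    · rcases (pZprime p).dvd_mul.mp h with h | h <;> [exact hb1 h; exact hb2 h]
    · push_cast
      rw [mul_add]
      calc (b1:ℚ) * b2 * x + (b1:ℚ) * b2 * y = (b2:ℚ) * ((b1:ℚ)*x) + (b1:ℚ) * ((b2:ℚ)*y) := by ring
        _ = (a1:ℚ) * b2 + (a2:ℚ) * b1 := by rw [h1, h2]; ring
  neg_mem' := by
    rintro x ⟨a, b, hb, h⟩
    exact ⟨-a, b, hb, by push_cast; rw [mul_neg, h]⟩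
  mul_mem' := by
    rintro x y ⟨a1, b1, hb1, h1⟩ ⟨a2, b2, hb2, h2⟩
    refine ⟨a1 * a2, b1 * b2, fun h => ?_, ?_⟩
    · rcases (pZprime p).dvd_mul.mp h with h | h <;> [exact hb1 h; exact hb2 h]
    · push_cast
      calc (b1:ℚ) * b2 * (x * y) = ((b1:ℚ)*x) * ((b2:ℚ)*y) := by ring
        _ = (a1:ℚ) * a2 := by rw [h1, h2]

/-- substitution `u ↦ u^p` over a general ring. -/
noncomputable def sub' {R : Type*} [CommRing R] (f : PowerSeries R) : PowerSeries R :=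
  PowerSeries.mk fun n => if p ∣ n then coeff (n / p) f else 0

lemma coeff_sub' {R : Type*} [CommRing R] (f : PowerSeries R) (n : ℕ) :
    coeff n (sub' p f) = if p ∣ n then coeff (n / p) f else 0 := by
  simp [sub']

lemma mapSub' {R S : Type*} [CommRing R] [CommRing S] (φ : R →+* S) (f : PowerSeries R) :
    PowerSeries.map φ (sub' p f) = sub' p (PowerSeries.map φ f) := by
  ext n
  simp [sub', apply_ite φ]

lemma coeff_pow_congr {R : Type*} [CommRing R] {j : ℕ} {f g : PowerSeries R}
    (h : ∀ i ≤ j, coeff i f = coeff i g) (N : ℕ) :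
    ∀ i ≤ j, coeff i (f ^ N) = coeff i (g ^ N) := by
  induction N with
  | zero => simp
  | succ N ih =>
    intro i hi
    rw [pow_succ, pow_succ, coeff_mul, coeff_mul]
    refine Finset.sum_congr rfl fun x hx => ?_
    rw [Finset.HasAntidiagonal.mem_antidiagonal] at hx
    rw [ih x.1 (le_trans (hx ▸ Nat.le_add_right _ _) hi),
      h x.2 (le_trans (hx ▸ Nat.le_add_left _ _) hi)]

/-- Frobenius for power series over a char-p ring where `x^p = x`. -/
lemma coeff_pow_p {R : Type*} [CommRing R] [CharP R p] (hfr : ∀ x : R, x ^ p = x)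
    (f : PowerSeries R) (j : ℕ) :
    coeff j (f ^ p) = coeff j (sub' p f) := by
  have hp : p.Prime := Fact.out
  set q : Polynomial R := trunc (j + 1) f with hq
  have hag : ∀ i ≤ j, coeff i f = coeff i (q : PowerSeries R) := by
    intro i hi
    rw [Polynomial.coeff_coe, coeff_trunc]
    simp [Nat.lt_succ_of_le hi]
  have h1 : coeff j (f ^ p) = (q ^ p).coeff j := by
    rw [coeff_pow_congr hag p j le_rfl, ← Polynomial.coeff_coe, Polynomial.coe_pow]
  have hfrob : frobenius R p = RingHom.id R := RingHom.ext fun x => hfr x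
  have h2 : q ^ p = Polynomial.expand R p q := by
    rw [← Polynomial.map_frobenius_expand, hfrob, Polynomial.map_id]
  rw [h1, h2, Polynomial.coeff_expand hp.pos, coeff_sub']
  split_ifs with h
  · rw [hag (j / p) (Nat.div_le_self _ _), Polynomial.coeff_coe]
  · rfl


lemma p_nonunit : ((p : ℕ) : Sp p) ∈ nonunits (Sp p) := by
  intro h
  obtain ⟨u, hu⟩ := isUnit_iff_exists_inv.mp h
  have hq : (p : ℚ) * (u : ℚ) = 1 := by exact_mod_cast congrArg (Subtype.val) hu
  obtain ⟨a, b, hb, hba⟩ := u.2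
  have hp : p.Prime := Fact.out
  have hppos : (p : ℚ) ≠ 0 := by exact_mod_cast hp.ne_zero
  have huval : (u : ℚ) = (p : ℚ)⁻¹ := by field_simp at hq ⊢; linarith
  apply hb
  have h2 : (b : ℚ) = (p : ℚ) * a := by
    rw [huval] at hba
    field_simp at hba
    linarith
  have h3 : b = (p : ℤ) * a := by exact_mod_cast h2
  exact ⟨a, h3⟩

lemma charQp : CharP ((Sp p) ⧸ (Ideal.span {((p : ℕ) : Sp p)} : Ideal (Sp p))) p :=
  CharP.quotient _ p (p_nonunit p)

lemma surjQp (y : (Sp p) ⧸ (Ideal.span {((p : ℕ) : Sp p)} : Ideal (Sp p))) :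
    ∃ z : ℤ, ((z : ℤ) : (Sp p) ⧸ (Ideal.span {((p : ℕ) : Sp p)} : Ideal (Sp p))) = y := by
  obtain ⟨x, rfl⟩ := Ideal.Quotient.mk_surjective y
  obtain ⟨a, b, hb, hba⟩ := x.2
  obtain ⟨u, v, huv⟩ := ((pZprime p).coprime_iff_not_dvd.mpr hb)
  refine ⟨v * a, ?_⟩
  rw [← map_intCast (Ideal.Quotient.mk (Ideal.span {((p : ℕ) : Sp p)} : Ideal (Sp p)))
    ((v * a : ℤ))]
  rw [Ideal.Quotient.mk_eq_mk_iff_sub_mem, Ideal.mem_span_singleton]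
  refine ⟨-(((u : ℤ) : Sp p) * x), ?_⟩
  apply Subtype.ext
  have huvq : (u : ℚ) * p + v * b = 1 := by exact_mod_cast huv
  push_cast
  linear_combination (-(v : ℚ)) * hba + (x : ℚ) * huvq

lemma powQp (x : (Sp p) ⧸ (Ideal.span {((p : ℕ) : Sp p)} : Ideal (Sp p))) : x ^ p = x := by
  haveI := charQp p
  obtain ⟨z, rfl⟩ := surjQp p x
  have hz : (p : ℤ) ∣ z ^ p - z := by
    rw [← ZMod.intCast_zmod_eq_zero_iff_dvd]
    push_cast
    rw [ZMod.pow_card]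
    ring
  obtain ⟨c, hc⟩ := hz
  have : ((z ^ p - z : ℤ) : (Sp p) ⧸ (Ideal.span {((p : ℕ) : Sp p)} : Ideal (Sp p))) = 0 := by
    rw [hc]
    push_cast
    rw [CharP.cast_eq_zero ((Sp p) ⧸ (Ideal.span {((p : ℕ) : Sp p)} : Ideal (Sp p))) p]
    ring
  push_cast at this
  linear_combination this

lemma key1 (T : PowerSeries (Sp p)) (j : ℕ) :
    ((p : ℕ) : Sp p) ∣ (coeff j) (T ^ p - sub' p T) := by
  haveI := charQp p
  set I : Ideal (Sp p) := Ideal.span {((p : ℕ) : Sp p)} with hI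
  rw [← Ideal.mem_span_singleton, ← hI, ← Ideal.Quotient.eq_zero_iff_mem]
  have hms : PowerSeries.map (Ideal.Quotient.mk I) (T ^ p - sub' p T)
      = (PowerSeries.map (Ideal.Quotient.mk I) T) ^ p
        - sub' p (PowerSeries.map (Ideal.Quotient.mk I) T) := by
    rw [RingHom.map_sub, RingHom.map_pow, mapSub']
  have h0 : Ideal.Quotient.mk I ((coeff j) (T ^ p - sub' p T))
      = coeff j (PowerSeries.map (Ideal.Quotient.mk I) (T ^ p - sub' p T)) := by
    rw [coeff_map]
  rw [h0, hms, LinearMap.map_sub,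
    coeff_pow_p p (powQp p) (PowerSeries.map (Ideal.Quotient.mk I) T) j, sub_self]

lemma key2 (T : PowerSeries (Sp p)) :
    ((p : ℕ) : PowerSeries (Sp p)) ∣ T ^ p - sub' p T := by
  refine ⟨PowerSeries.mk fun j => (key1 p T j).choose, ?_⟩
  have hC : ((p : ℕ) : PowerSeries (Sp p)) = C ((p : ℕ) : Sp p) :=
    (map_natCast (C (R := Sp p)) p).symm
  apply PowerSeries.ext
  intro j
  rw [hC, coeff_C_mul, coeff_mk]
  exact (key1 p T j).choose_spec

end Aux

theorem pow_sub_substPow_pow_mem (p : ℕ) (hp : p.Prime) (t : PowerSeries ℚ)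
    (ht : ∀ n : ℕ, PInt p (coeff n t)) (ht0 : constantCoeff t = 0)
    (n : ℕ) (hn : 1 ≤ n) :
    (∀ m : ℕ, ∃ a b : ℤ, ¬ (p : ℤ) ∣ b ∧
        (b : ℚ) * coeff m (t ^ (n * p) - (substPow p t) ^ n) = ((n * p : ℕ) : ℚ) * a) ∧
    (∀ m : ℕ, m < n * p → coeff m (t ^ (n * p) - (substPow p t) ^ n) = 0) := by
  haveI : Fact p.Prime := ⟨hp⟩
  constructor
  · -- divisibility part
    intro m
    set k := n.factorization p with hk
    set m' := n / p ^ k with hm'def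
    have hnfac : p ^ k * m' = n := Nat.ordProj_mul_ordCompl_eq_self n p
    have hm' : ¬ p ∣ m' := Nat.not_dvd_ordCompl hp (by omega)
    set T : PowerSeries (Sp p) := PowerSeries.mk fun i => (⟨coeff i t, ht i⟩ : Sp p) with hT
    have hmapT : PowerSeries.map (Sp p).subtype T = t := by
      ext i; simp [hT]
    have hdvd : ((p : ℕ) : PowerSeries (Sp p)) ^ (k + 1) ∣ T ^ (n * p) - (sub' p T) ^ n := by
      have h2 := dvd_sub_pow_of_dvd_sub (key2 p T) k
      have h3 := sub_dvd_pow_sub_pow ((T ^ p) ^ p ^ k) ((sub' p T) ^ p ^ k) m'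
      have h4 : ((T ^ p) ^ p ^ k) ^ m' = T ^ (n * p) := by
        rw [← pow_mul, ← pow_mul]
        congr 1
        rw [← hnfac]
        ring
      have h5 : ((sub' p T) ^ p ^ k) ^ m' = (sub' p T) ^ n := by
        rw [← pow_mul, hnfac]
      rw [h4, h5] at h3
      exact h2.trans h3
    obtain ⟨G, hG⟩ := hdvd
    have hsub : PowerSeries.map (Sp p).subtype (sub' p T) = substPow p t := by
      rw [mapSub', hmapT]; rfl
    have hcoeval : coeff m (t ^ (n * p) - (substPow p t) ^ n)
        = ((coeff m (T ^ (n * p) - (sub' p T) ^ n) : Sp p) : ℚ) := by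
      have heq : t ^ (n * p) - (substPow p t) ^ n
          = PowerSeries.map (Sp p).subtype (T ^ (n * p) - (sub' p T) ^ n) := by
        rw [RingHom.map_sub, RingHom.map_pow, RingHom.map_pow, hmapT, hsub]
      rw [heq, coeff_map]
      rfl
    have hCpow : ((p : ℕ) : PowerSeries (Sp p)) ^ (k + 1)
        = C (((p : ℕ) : Sp p) ^ (k + 1)) := by
      rw [map_pow, map_natCast]
    have hcoe2 : coeff m (T ^ (n * p) - (sub' p T) ^ n)
        = ((p : ℕ) : Sp p) ^ (k + 1) * coeff m G := by
      rw [hG, hCpow, coeff_C_mul]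
    obtain ⟨a0, b0, hb0, hg⟩ := (coeff m G).2
    refine ⟨a0, b0 * (m' : ℤ), ?_, ?_⟩
    · intro h
      rcases (pZprime p).dvd_mul.mp h with h | h
      · exact hb0 h
      · exact hm' (by exact_mod_cast h)
    · have hval : ((coeff m (T ^ (n * p) - (sub' p T) ^ n) : Sp p) : ℚ)
          = (p : ℚ) ^ (k + 1) * ((coeff m G : Sp p) : ℚ) := by
        rw [hcoe2]; push_cast; ring
      rw [hcoeval, hval]
      have hnp : ((n * p : ℕ) : ℚ) = (p : ℚ) ^ (k + 1) * (m' : ℚ) := by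
        rw [show n * p = p ^ (k + 1) * m' by rw [← hnfac, pow_succ]; ring]
        push_cast; ring
      rw [hnp]
      push_cast
      linear_combination ((m' : ℚ) * (p : ℚ) ^ (k + 1)) * hg
  · -- order part
    intro m hm
    have hX : (X : PowerSeries ℚ) ^ (n * p) ∣ t ^ (n * p) - (substPow p t) ^ n := by
      have h1 : (X : PowerSeries ℚ) ^ (n * p) ∣ t ^ (n * p) :=
        pow_dvd_pow_of_dvd (X_dvd_iff.mpr ht0) _
      have h2 : (X : PowerSeries ℚ) ^ p ∣ substPow p t := by
        rw [X_pow_dvd_iff]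
        intro i hi
        rw [substPow, coeff_mk]
        rcases Nat.eq_zero_or_pos i with rfl | hi0
        · simpa using ht0
        · rw [if_neg (Nat.not_dvd_of_pos_of_lt hi0 hi)]
      have h3 : (X : PowerSeries ℚ) ^ (n * p) ∣ (substPow p t) ^ n := by
        have := pow_dvd_pow_of_dvd h2 n
        rwa [← pow_mul, mul_comm p n] at this
      exact dvd_sub h1 h3
    exact X_pow_dvd_iff.mp hX m hm
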